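/- The number x = Σ_{k=1}^∞ ε_k/(q_1 q_2 ⋯ q_k) is rational if and only if there exist an integer n ≥ 0 and a positive integer m such that σ^n(x) = σ^{n+m}(x). -/

import Mathlib

/-- The `n`-th shift `σ^n(x) = Σ_{k=n+1}^∞ ε_k/(q_{n+1} q_{n+2} ⋯ q_k)` of the Cantor
series with bases `q` and digits `ε`; in particular `σ^0(x) = x` is the Cantor series
value itself. -/
noncomputable def cantorShift (q ε : ℕ → ℕ) (n : ℕ) : ℝ :=
  ∑' k : ℕ, (ε (n + k + 1) : ℝ) / ∏ i ∈ Finset.Icc (n + 1) (n + k + 1), (q i : ℝ)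

section aux
variable (q ε : ℕ → ℕ) (hq : ∀ k, 1 ≤ k → 2 ≤ q k) (hε : ∀ k, 1 ≤ k → ε k ≤ q k - 1)

include hq in
lemma cantor_prod_pos (a b : ℕ) (ha : 1 ≤ a) :
    0 < ∏ i ∈ Finset.Icc a b, (q i : ℝ) := by
  apply Finset.prod_pos
  intro i hi
  have : 1 ≤ i := le_trans ha (Finset.mem_Icc.mp hi).1
  have h2 := hq i this
  have : (0:ℝ) < q i := by exact_mod_cast lt_of_lt_of_le two_pos h2
  exact this

include hq in
lemma cantor_prod_ge (n k : ℕ) :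
    (2:ℝ)^k ≤ ∏ i ∈ Finset.Icc (n+1) (n+k), (q i : ℝ) := by
  have hcard : (Finset.Icc (n+1) (n+k)).card = k := by
    rw [Nat.card_Icc]; omega
  calc (2:ℝ)^k = ∏ _i ∈ Finset.Icc (n+1) (n+k), (2:ℝ) := by
        rw [Finset.prod_const, hcard]
    _ ≤ ∏ i ∈ Finset.Icc (n+1) (n+k), (q i : ℝ) := by
        apply Finset.prod_le_prod (fun i _ => by norm_num)
        intro i hi
        have : 1 ≤ i := le_trans (Nat.le_add_left 1 n) (Finset.mem_Icc.mp hi).1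
        exact_mod_cast hq i this

include hq hε in
lemma cantor_summable (n : ℕ) :
    Summable (fun k : ℕ => (ε (n + k + 1) : ℝ) / ∏ i ∈ Finset.Icc (n + 1) (n + k + 1), (q i : ℝ)) := by
  refine Summable.of_nonneg_of_le ?_ ?_
    (summable_geometric_of_lt_one (r := (1/2:ℝ)) (by norm_num) (by norm_num))
  · intro k
    have := cantor_prod_pos q hq (n+1) (n+k+1) (by omega)
    positivity
  · intro k
    have hP : 0 < ∏ i ∈ Finset.Icc (n+1) (n+k), (q i : ℝ) :=
      cantor_prod_pos q hq (n+1) (n+k) (by omega)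
    have hq1 : (2:ℝ) ≤ q (n+k+1) := by exact_mod_cast hq (n+k+1) (by omega)
    have hsplit : ∏ i ∈ Finset.Icc (n+1) (n+k+1), (q i : ℝ)
        = (∏ i ∈ Finset.Icc (n+1) (n+k), (q i : ℝ)) * q (n+k+1) :=
      Finset.prod_Icc_succ_top (by omega) _
    have hεq : (ε (n+k+1) : ℝ) ≤ q (n+k+1) := by
      have := hε (n+k+1) (by omega)
      have h2 := hq (n+k+1) (by omega)
      exact_mod_cast le_trans this (Nat.sub_le _ _)
    rw [hsplit]
    have h2k : (2:ℝ)^k ≤ ∏ i ∈ Finset.Icc (n+1) (n+k), (q i : ℝ) := cantor_prod_ge q hq n k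
    have key : (ε (n+k+1) : ℝ) / ((∏ i ∈ Finset.Icc (n+1) (n+k), (q i : ℝ)) * q (n+k+1))
        ≤ 1 / ∏ i ∈ Finset.Icc (n+1) (n+k), (q i : ℝ) := by
      rw [div_le_div_iff₀ (by positivity) hP]
      calc (ε (n+k+1) : ℝ) * ∏ i ∈ Finset.Icc (n+1) (n+k), (q i : ℝ)
          ≤ (q (n+k+1) : ℝ) * ∏ i ∈ Finset.Icc (n+1) (n+k), (q i : ℝ) := by
            apply mul_le_mul_of_nonneg_right hεq hP.le
        _ ≤ 1 * ((∏ i ∈ Finset.Icc (n+1) (n+k), (q i : ℝ)) * q (n+k+1)) := le_of_eq (by ring)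
    refine le_trans key ?_
    calc 1 / ∏ i ∈ Finset.Icc (n+1) (n+k), (q i : ℝ)
        ≤ 1 / (2:ℝ)^k := one_div_le_one_div_of_le (by positivity) h2k
      _ = (1/2:ℝ)^k := (one_div_pow 2 k).symm

include hq hε in
lemma cantor_rec (n : ℕ) :
    cantorShift q ε n = ((ε (n+1) : ℝ) + cantorShift q ε (n+1)) / q (n+1) := by
  have hs := cantor_summable q ε hq hε n
  have hq0 : (q (n+1) : ℝ) ≠ 0 := by
    have := hq (n+1) (by omega); positivity
  unfold cantorShift
  rw [Summable.tsum_eq_zero_add hs]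
  have h0 : (ε (n + 0 + 1) : ℝ) / ∏ i ∈ Finset.Icc (n+1) (n+0+1), (q i : ℝ)
      = (ε (n+1) : ℝ) / q (n+1) := by
    norm_num
  have htail : ∀ k : ℕ, (ε (n + (k+1) + 1) : ℝ) / ∏ i ∈ Finset.Icc (n+1) (n+(k+1)+1), (q i : ℝ)
      = ((ε ((n+1) + k + 1) : ℝ) / ∏ i ∈ Finset.Icc ((n+1)+1) ((n+1)+k+1), (q i : ℝ)) / q (n+1) := by
    intro k
    have hprod : ∏ i ∈ Finset.Icc (n+1) (n+(k+1)+1), (q i : ℝ)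
        = (q (n+1) : ℝ) * ∏ i ∈ Finset.Icc (n+2) (n+k+2), (q i : ℝ) := by
      rw [← Finset.Ico_add_one_right_eq_Icc, ← Finset.Ico_add_one_right_eq_Icc,
        Finset.prod_eq_prod_Ico_succ_bot (by omega)]
      congr 1
    rw [hprod]
    have h1 : n + (k+1) + 1 = (n+1) + k + 1 := by ring
    have h2 : (n+1)+1 = n+2 := by ring
    have h3 : (n+1)+k+1 = n+k+2 := by ring
    rw [h1, h2, h3]
    rw [div_div]
    ring_nf
  rw [h0]
  rw [tsum_congr htail, tsum_div_const]
  ring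

include hq in
lemma cantor_nonneg (n : ℕ) : 0 ≤ cantorShift q ε n := by
  apply tsum_nonneg
  intro k
  have := cantor_prod_pos q hq (n+1) (n+k+1) (by omega)
  positivity

include hq hε in
lemma cantor_le_one (n : ℕ) : cantorShift q ε n ≤ 1 := by
  apply Summable.tsum_le_of_sum_range_le (cantor_summable q ε hq hε n)
  intro N
  have hstep : ∀ k ∈ Finset.range N,
      (ε (n + k + 1) : ℝ) / ∏ i ∈ Finset.Icc (n+1) (n+k+1), (q i : ℝ)
        ≤ (fun k => 1 / ∏ i ∈ Finset.Icc (n+1) (n+k), (q i : ℝ)) k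
          - (fun k => 1 / ∏ i ∈ Finset.Icc (n+1) (n+k), (q i : ℝ)) (k+1) := by
    intro k _
    show (ε (n + k + 1) : ℝ) / ∏ i ∈ Finset.Icc (n+1) (n+k+1), (q i : ℝ)
        ≤ 1 / ∏ i ∈ Finset.Icc (n+1) (n+k), (q i : ℝ)
          - 1 / ∏ i ∈ Finset.Icc (n+1) (n+(k+1)), (q i : ℝ)
    have hP : 0 < ∏ i ∈ Finset.Icc (n+1) (n+k), (q i : ℝ) :=
      cantor_prod_pos q hq (n+1) (n+k) (by omega)
    have hq2 : (2:ℝ) ≤ q (n+k+1) := by exact_mod_cast hq (n+k+1) (by omega)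
    have hsplit : ∏ i ∈ Finset.Icc (n+1) (n+(k+1)), (q i : ℝ)
        = (∏ i ∈ Finset.Icc (n+1) (n+k), (q i : ℝ)) * q (n+k+1) := by
      rw [show n + (k+1) = n+k+1 by ring]
      exact Finset.prod_Icc_succ_top (by omega) _
    have hεq : (ε (n+k+1) : ℝ) ≤ (q (n+k+1) : ℝ) - 1 := by
      have h1 := hε (n+k+1) (by omega)
      have h2 := hq (n+k+1) (by omega)
      have : (ε (n+k+1) : ℝ) ≤ ((q (n+k+1) - 1 : ℕ) : ℝ) := by exact_mod_cast h1
      rwa [Nat.cast_sub (by omega), Nat.cast_one] at this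
    have hεq' : (ε (n+(k+1)) : ℝ) ≤ (q (n+k+1) : ℝ) - 1 := by
      rw [show n+(k+1) = n+k+1 by ring]; exact hεq
    rw [show n + k + 1 = n + (k+1) by ring, hsplit]
    rw [div_sub_div _ _ (ne_of_gt hP) (by positivity),
      div_le_div_iff₀ (by positivity) (by positivity)]
    have hqpos : (0:ℝ) < q (n+k+1) := lt_of_lt_of_le two_pos hq2
    nlinarith [mul_le_mul_of_nonneg_right hεq' (mul_pos hP (mul_pos hP hqpos)).le]
  calc ∑ k ∈ Finset.range N, (ε (n + k + 1) : ℝ) / ∏ i ∈ Finset.Icc (n+1) (n+k+1), (q i : ℝ)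
      ≤ ∑ k ∈ Finset.range N,
          ((fun k => 1 / ∏ i ∈ Finset.Icc (n+1) (n+k), (q i : ℝ)) k
            - (fun k => 1 / ∏ i ∈ Finset.Icc (n+1) (n+k), (q i : ℝ)) (k+1)) :=
        Finset.sum_le_sum hstep
    _ = (fun k => 1 / ∏ i ∈ Finset.Icc (n+1) (n+k), (q i : ℝ)) 0
        - (fun k => 1 / ∏ i ∈ Finset.Icc (n+1) (n+k), (q i : ℝ)) N :=
        Finset.sum_range_sub' _ N
    _ ≤ 1 := by
        have hP : 0 < ∏ i ∈ Finset.Icc (n+1) (n+N), (q i : ℝ) :=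
          cantor_prod_pos q hq (n+1) (n+N) (by omega)
        simp only
        have h1 : (0:ℝ) ≤ 1 / ∏ i ∈ Finset.Icc (n+1) (n+N), (q i : ℝ) := by positivity
        have h0 : (1:ℝ) / ∏ i ∈ Finset.Icc (n+1) (n+0), (q i : ℝ) = 1 := by simp
        rw [h0]
        linarith

include hq hε in
lemma cantor_rat_iff (n : ℕ) :
    (∃ a : ℚ, cantorShift q ε 0 = (a:ℝ)) ↔ (∃ a : ℚ, cantorShift q ε n = (a:ℝ)) := by
  induction n with
  | zero => rfl
  | succ n ih =>
    rw [ih]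
    have hrec := cantor_rec q ε hq hε n
    have hq0 : (q (n+1) : ℝ) ≠ 0 := by
      have := hq (n+1) (by omega)
      have : (0:ℝ) < q (n+1) := by exact_mod_cast lt_of_lt_of_le two_pos this
      positivity
    constructor
    · rintro ⟨a, ha⟩
      refine ⟨a * q (n+1) - ε (n+1), ?_⟩
      have : cantorShift q ε (n+1) = cantorShift q ε n * q (n+1) - ε (n+1) := by
        rw [hrec]; field_simp; ring
      rw [this, ha]; push_cast; ring
    · rintro ⟨a, ha⟩
      refine ⟨((ε (n+1) : ℚ) + a) / q (n+1), ?_⟩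
      rw [hrec, ha]; push_cast; ring

include hq hε in
lemma cantor_tail_eq (n m : ℕ) (hm : 0 < m) :
    ∃ s Q : ℚ, 2 ≤ Q ∧ cantorShift q ε n = (s:ℝ) + cantorShift q ε (n+m) / (Q:ℝ) := by
  induction m with
  | zero => omega
  | succ m ih =>
    rcases Nat.eq_zero_or_pos m with hm0 | hm0
    · subst hm0
      refine ⟨(ε (n+1) : ℚ) / (q (n+1) : ℚ), (q (n+1) : ℚ),
        by exact_mod_cast hq (n+1) (by omega), ?_⟩
      have hrec := cantor_rec q ε hq hε n
      have hq0 : (q (n+1) : ℝ) ≠ 0 := by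
        have := hq (n+1) (by omega)
        have : (0:ℝ) < q (n+1) := by exact_mod_cast lt_of_lt_of_le two_pos this
        positivity
      rw [hrec]; push_cast; ring
    · obtain ⟨s, Q, hQ, heq⟩ := ih hm0
      have hrec := cantor_rec q ε hq hε (n+m)
      have hq2 : (2:ℚ) ≤ (q (n+m+1) : ℚ) := by exact_mod_cast hq (n+m+1) (by omega)
      have hq0 : (q (n+m+1) : ℝ) ≠ 0 := by
        have : (0:ℚ) < q (n+m+1) := lt_of_lt_of_le two_pos hq2
        exact_mod_cast ne_of_gt this
      have hQ0 : (Q:ℝ) ≠ 0 := by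
        have : (2:ℝ) ≤ (Q:ℝ) := by exact_mod_cast hQ
        linarith
      refine ⟨s + (ε (n+m+1) : ℚ) / (Q * q (n+m+1)), Q * q (n+m+1), ?_, ?_⟩
      · nlinarith
      · rw [show n + (m+1) = (n+m)+1 by ring] at *
        rw [heq, hrec]
        push_cast
        field_simp
        ring
end aux

/-- `x = Σ_{k=1}^∞ ε_k/(q_1 ⋯ q_k)` is rational iff there are `n ≥ 0`
and `m ≥ 1` with `σ^n(x) = σ^{n+m}(x)`. -/
theorem cantor_rational_iff_shift_eq
    (q : ℕ → ℕ) (hq : ∀ k, 1 ≤ k → 2 ≤ q k)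
    (ε : ℕ → ℕ) (hε : ∀ k, 1 ≤ k → ε k ≤ q k - 1)
    (x : ℝ) (hx : x = cantorShift q ε 0) :
    (∃ a : ℚ, x = (a : ℝ)) ↔
    (∃ n m : ℕ, 0 < m ∧ cantorShift q ε n = cantorShift q ε (n + m)) := by
  subst hx
  constructor
  · rintro ⟨a, ha⟩
    -- every shift is c/d with d = a.den
    set d : ℤ := (a.den : ℤ) with hd
    have hd0 : 0 < d := by positivity
    have hrep : ∀ n, ∃ c : ℤ, cantorShift q ε n = (c : ℝ) / (d : ℝ) := by
      intro n
      induction n with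
      | zero =>
        refine ⟨a.num, ?_⟩
        rw [ha, Rat.cast_def]
        norm_num [hd]
      | succ n ih =>
        obtain ⟨c, hc⟩ := ih
        have hrec := cantor_rec q ε hq hε n
        have hq0 : (q (n+1) : ℝ) ≠ 0 := by have := hq (n+1) (by omega); positivity
        refine ⟨(q (n+1)) * c - (ε (n+1)) * d, ?_⟩
        have : cantorShift q ε (n+1) = cantorShift q ε n * q (n+1) - ε (n+1) := by
          rw [hrec]; field_simp; ring
        rw [this, hc]
        have hdR : (d:ℝ) ≠ 0 := by positivity
        field_simp
        push_cast
        ring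
    choose c hc using hrep
    have hmem : ∀ n ∈ Finset.range (d.toNat + 2), c n ∈ Finset.Icc (0:ℤ) d := by
      intro n _
      have h0 := cantor_nonneg q ε hq n
      have h1 := cantor_le_one q ε hq hε n
      rw [hc n] at h0 h1
      have hdR : (0:ℝ) < (d:ℝ) := by exact_mod_cast hd0
      rw [Finset.mem_Icc]
      constructor
      · have := (le_div_iff₀ hdR).mp h0
        rw [zero_mul] at this
        exact_mod_cast this
      · have : (c n : ℝ) / d ≤ 1 := h1
        rw [div_le_one hdR] at this
        exact_mod_cast this
    have hcard : (Finset.Icc (0:ℤ) d).card < (Finset.range (d.toNat + 2)).card := by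
      rw [Int.card_Icc, Finset.card_range]
      omega
    obtain ⟨i, hi, j, hj, hij, hcij⟩ :=
      Finset.exists_ne_map_eq_of_card_lt_of_maps_to hcard hmem
    rcases Nat.lt_or_ge i j with hlt | hge
    · refine ⟨i, j - i, by omega, ?_⟩
      rw [show i + (j - i) = j by omega, hc i, hc j, hcij]
    · have hlt : j < i := by omega
      refine ⟨j, i - j, by omega, ?_⟩
      rw [show j + (i - j) = i by omega, hc i, hc j, hcij]
  · rintro ⟨n, m, hm, heq⟩
    obtain ⟨s, Q, hQ, htail⟩ := cantor_tail_eq q ε hq hε n m hm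
    rw [← heq] at htail
    have hQR : (2:ℝ) ≤ (Q:ℝ) := by exact_mod_cast hQ
    have hQ0 : (Q:ℝ) ≠ 0 := by linarith
    have hQ1 : (Q:ℝ) - 1 ≠ 0 := by linarith
    have htn : cantorShift q ε n = ((s * Q / (Q - 1) : ℚ) : ℝ) := by
      push_cast
      have h1 : cantorShift q ε n * (Q - 1) = s * Q := by
        field_simp at htail
        linarith [htail]
      field_simp
      linarith [h1]
    rw [cantor_rat_iff q ε hq hε n]
    exact ⟨s * Q / (Q - 1), htn⟩
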